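/- Let Q₁, Q₂ ∈ {∃, ∀}, let x₁ and x₂ be distinct individual variables, let G₁[·] be a context in which x₂ does not occur free (reading the hole as empty), and let G₂ be a formula. Let F₀ = Q₁x₁. G₁[Q₂x₂. G₂]; let F₁ = Q₁x₁. G₁[G₂{x₂ ↦ εx₂. ¬^{Q₂} G₂}] (the result of rewriting the inner redex); and let F₂ = (G₁[Q₂x₂. G₂]){x₁ ↦ εx₁. ¬^{Q₁} G₁[Q₂x₂. G₂]} (the result of rewriting the outer, top-level redex). Then there exist formulas F₃ and F₄ such that: (1) F₁ → F₄, F₃ → F₄, and F₂ ⇉ F₃; (2) if x₂ occurs free in G₂ (the inner step is non-vacuous), then F₃ →₁ F₄ and F₂ ⇉₁ F₃ (all parallel steps non-vacuous); (3) if x₁ occurs free in G₁[Q₂x₂. G₂] (the outer step is non-vacuous), then F₁ →₁ F₄; (4) if x₁ does not occur free in G₁[Q₂x₂. G₂] (the outer step is vacuous), then F₃ = F₂. -/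
import Mathlib


mutual
  /-- Terms of first-order logic extended with Hilbert's ε-operator,
  in de Bruijn representation (so formulas are automatically identified up
  to renaming of bound variables). -/
  inductive Tm : Type
    | var : ℕ → Tm
    | fn : ℕ → (k : ℕ) → (Fin k → Tm) → Tm
    | eps : Fm → Tm
  /-- Formulas; `ex F`, `all F` and `Tm.eps F` bind de Bruijn index 0 of `F`. -/
  inductive Fm : Type
    | pred : ℕ → (k : ℕ) → (Fin k → Tm) → Fm
    | not : Fm → Fm
    | or : Fm → Fm → Fm
    | and : Fm → Fm → Fm
    | imp : Fm → Fm → Fm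
    | ex : Fm → Fm
    | all : Fm → Fm
end

/-- Lifting a renaming under a binder. -/
def upRen (r : ℕ → ℕ) : ℕ → ℕ
  | 0 => 0
  | n + 1 => r n + 1

mutual
  /-- Renaming of free variables in a term. -/
  def renT (r : ℕ → ℕ) : Tm → Tm
    | .var i => .var (r i)
    | .fn f k a => .fn f k (fun i => renT r (a i))
    | .eps F => .eps (renF (upRen r) F)
  /-- Renaming of free variables in a formula. -/
  def renF (r : ℕ → ℕ) : Fm → Fm
    | .pred p k a => .pred p k (fun i => renT r (a i))
    | .not F => .not (renF r F)
    | .or F G => .or (renF r F) (renF r G)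
    | .and F G => .and (renF r F) (renF r G)
    | .imp F G => .imp (renF r F) (renF r G)
    | .ex F => .ex (renF (upRen r) F)
    | .all F => .all (renF (upRen r) F)
end

/-- Lifting a substitution under a binder. -/
def upSub (σ : ℕ → Tm) : ℕ → Tm
  | 0 => .var 0
  | n + 1 => renT Nat.succ (σ n)

mutual
  /-- Capture-avoiding simultaneous substitution on terms. -/
  def subT (σ : ℕ → Tm) : Tm → Tm
    | .var i => σ i
    | .fn f k a => .fn f k (fun i => subT σ (a i))
    | .eps F => .eps (subF (upSub σ) F)
  /-- Capture-avoiding simultaneous substitution on formulas. -/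
  def subF (σ : ℕ → Tm) : Fm → Fm
    | .pred p k a => .pred p k (fun i => subT σ (a i))
    | .not F => .not (subF σ F)
    | .or F G => .or (subF σ F) (subF σ G)
    | .and F G => .and (subF σ F) (subF σ G)
    | .imp F G => .imp (subF σ F) (subF σ G)
    | .ex F => .ex (subF (upSub σ) F)
    | .all F => .all (subF (upSub σ) F)
end

/-- `inst1 F t` is `F{x ↦ t}` for the variable `x` bound just outside `F`
(de Bruijn index 0). -/
def inst1 (F : Fm) (t : Tm) : Fm :=
  subF (fun n => match n with | 0 => t | n + 1 => .var n) F

mutual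
  /-- The variable with de Bruijn index `n` occurs free in the term. -/
  def freeT (n : ℕ) : Tm → Prop
    | .var i => i = n
    | .fn _ _ a => ∃ i, freeT n (a i)
    | .eps F => freeF (n + 1) F
  /-- The variable with de Bruijn index `n` occurs free in the formula. -/
  def freeF (n : ℕ) : Fm → Prop
    | .pred _ _ a => ∃ i, freeT n (a i)
    | .not F => freeF n F
    | .or F G => freeF n F ∨ freeF n G
    | .and F G => freeF n F ∨ freeF n G
    | .imp F G => freeF n F ∨ freeF n G
    | .ex F => freeF (n + 1) F
    | .all F => freeF (n + 1) F
end

mutual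
  /-- Number of occurrences of quantifiers (∃ and ∀, but not ε) in a term. -/
  def qcT : Tm → ℕ
    | .var _ => 0
    | .fn _ _ a => ∑ i, qcT (a i)
    | .eps F => qcF F
  /-- Number of occurrences of quantifiers (∃ and ∀, but not ε) in a formula. -/
  def qcF : Fm → ℕ
    | .pred _ _ a => ∑ i, qcT (a i)
    | .not F => qcF F
    | .or F G => qcF F + qcF G
    | .and F G => qcF F + qcF G
    | .imp F G => qcF F + qcF G
    | .ex F => qcF F + 1
    | .all F => qcF F + 1
end

/-- Quantifier symbols. -/
inductive Quant : Type
  | ex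
  | all

/-- `mkQ Q A` is the quantified formula `Qx. A`. -/
def mkQ : Quant → Fm → Fm
  | .ex, A => .ex A
  | .all, A => .all A

/-- `negQ Q A` is `¬^Q A`: `¬A` for `Q = ∀` and `A` for `Q = ∃`. -/
def negQ : Quant → Fm → Fm
  | .ex, A => A
  | .all, A => .not A

/-- `qeRedex Q A` is `A{x ↦ εx. ¬^Q A}`, the contractum of the redex `Qx. A`. -/
def qeRedex (Q : Quant) (A : Fm) : Fm := inst1 A (.eps (negQ Q A))

mutual
  /-- One rewrite step inside a term, where each rewritten quantified subformula
  `Qx. A` is required to satisfy the side condition `P A`. -/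
  inductive StepT (P : Fm → Prop) : Tm → Tm → Prop
    | fn {f k} {a : Fin k → Tm} {j : Fin k} {t' : Tm} :
        StepT P (a j) t' → StepT P (.fn f k a) (.fn f k (Function.update a j t'))
    | eps {F F'} : StepF P F F' → StepT P (.eps F) (.eps F')
  /-- One rewrite step on formulas: replace one occurrence of a subformula
  `Qx. A` (with `P A`) by `A{x ↦ εx. ¬^Q A}`. -/
  inductive StepF (P : Fm → Prop) : Fm → Fm → Prop
    | root {Q A} : P A → StepF P (mkQ Q A) (qeRedex Q A)
    | pred {p k} {a : Fin k → Tm} {j : Fin k} {t' : Tm} :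
        StepT P (a j) t' → StepF P (.pred p k a) (.pred p k (Function.update a j t'))
    | not {F F'} : StepF P F F' → StepF P (.not F) (.not F')
    | orL {F F' G} : StepF P F F' → StepF P (.or F G) (.or F' G)
    | orR {F G G'} : StepF P G G' → StepF P (.or F G) (.or F G')
    | andL {F F' G} : StepF P F F' → StepF P (.and F G) (.and F' G)
    | andR {F G G'} : StepF P G G' → StepF P (.and F G) (.and F G')
    | impL {F F' G} : StepF P F F' → StepF P (.imp F G) (.imp F' G)
    | impR {F G G'} : StepF P G G' → StepF P (.imp F G) (.imp F G')
    | ex {F F'} : StepF P F F' → StepF P (.ex F) (.ex F')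
    | all {F F'} : StepF P F F' → StepF P (.all F) (.all F')
end

/-- The quantifier-elimination rewrite relation `→` on formulas. -/
def Step : Fm → Fm → Prop := StepF (fun _ => True)

/-- `→₀`: the steps rewriting a vacuous quantifier (bound variable not free in the body). -/
def Step0 : Fm → Fm → Prop := StepF (fun A => ¬ freeF 0 A)

/-- `→₁`: the steps rewriting a non-vacuous quantifier. -/
def Step1 : Fm → Fm → Prop := StepF (fun A => freeF 0 A)

/-- `→ℐ`: the innermost steps, whose rewritten subformula `Qx. A` contains no
quantifier other than the outermost `Q`. -/
def StepI : Fm → Fm → Prop := StepF (fun A => qcF A = 0)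


mutual
  /-- Parallel rewriting inside terms (finitely many pairwise disjoint redexes
  rewritten simultaneously); side condition `P` on the bodies of the rewritten
  quantifiers. -/
  inductive ParT (P : Fm → Prop) : Tm → Tm → Prop
    | var {i} : ParT P (.var i) (.var i)
    | fn {f k} {a b : Fin k → Tm} :
        (∀ i, ParT P (a i) (b i)) → ParT P (.fn f k a) (.fn f k b)
    | eps {F F'} : ParF P F F' → ParT P (.eps F) (.eps F')
  /-- `⇉`: parallel rewriting on formulas, simultaneously replacing the
  subformulas at finitely many pairwise disjoint positions. -/
  inductive ParF (P : Fm → Prop) : Fm → Fm → Prop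
    | root {Q A} : P A → ParF P (mkQ Q A) (qeRedex Q A)
    | pred {p k} {a b : Fin k → Tm} :
        (∀ i, ParT P (a i) (b i)) → ParF P (.pred p k a) (.pred p k b)
    | not {F F'} : ParF P F F' → ParF P (.not F) (.not F')
    | or {F F' G G'} : ParF P F F' → ParF P G G' → ParF P (.or F G) (.or F' G')
    | and {F F' G G'} : ParF P F F' → ParF P G G' → ParF P (.and F G) (.and F' G')
    | imp {F F' G G'} : ParF P F F' → ParF P G G' → ParF P (.imp F G) (.imp F' G')
    | ex {F F'} : ParF P F F' → ParF P (.ex F) (.ex F')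
    | all {F F'} : ParF P F F' → ParF P (.all F) (.all F')
end

/-- `⇉`: the parallel version of the rewrite relation `→`. -/
def Par : Fm → Fm → Prop := ParF (fun _ => True)

/-- `⇉₁`: parallel rewriting in which every replaced quantifier is non-vacuous. -/
def Par1 : Fm → Fm → Prop := ParF (fun A => freeF 0 A)

mutual
  /-- One-hole contexts whose overall shape is a term; the hole is a formula hole. -/
  inductive CtxT : Type
    | fn : ℕ → (k : ℕ) → (Fin k → Tm) → Fin k → CtxT → CtxT
    | eps : CtxF → CtxT
  /-- One-hole contexts whose overall shape is a formula; the hole is a formula hole. -/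
  inductive CtxF : Type
    | hole : CtxF
    | pred : ℕ → (k : ℕ) → (Fin k → Tm) → Fin k → CtxT → CtxF
    | not : CtxF → CtxF
    | orL : CtxF → Fm → CtxF
    | orR : Fm → CtxF → CtxF
    | andL : CtxF → Fm → CtxF
    | andR : Fm → CtxF → CtxF
    | impL : CtxF → Fm → CtxF
    | impR : Fm → CtxF → CtxF
    | ex : CtxF → CtxF
    | all : CtxF → CtxF
end

mutual
  /-- Filling the hole of a term-shaped context with a formula
  (capture-permitting, as usual for contexts). -/
  def fillT : CtxT → Fm → Tm
    | .fn f k a j c, F => .fn f k (Function.update a j (fillT c F))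
    | .eps c, F => .eps (fillF c F)
  /-- Filling the hole of a formula-shaped context with a formula. -/
  def fillF : CtxF → Fm → Fm
    | .hole, F => F
    | .pred p k a j c, F => .pred p k (Function.update a j (fillT c F))
    | .not c, F => .not (fillF c F)
    | .orL c G, F => .or (fillF c F) G
    | .orR G c, F => .or G (fillF c F)
    | .andL c G, F => .and (fillF c F) G
    | .andR G c, F => .and G (fillF c F)
    | .impL c G, F => .imp (fillF c F) G
    | .impR G c, F => .imp G (fillF c F)
    | .ex c, F => .ex (fillF c F)
    | .all c, F => .all (fillF c F)
end


/-! ### Auxiliary lemmas -/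

section Aux

/-- The substitution performing `inst1`. -/
def iσ (t : Tm) : ℕ → Tm := fun n => match n with | 0 => t | n + 1 => .var n

theorem inst1_eq (F : Fm) (t : Tm) : inst1 F t = subF (iσ t) F := rfl

theorem upRen_comp (r s : ℕ → ℕ) :
    (fun n => upRen r (upRen s n)) = upRen (fun n => r (s n)) := by
  funext n; cases n <;> simp [upRen]

mutual
theorem renT_renT (r s : ℕ → ℕ) : ∀ t : Tm, renT r (renT s t) = renT (fun n => r (s n)) t
  | .var i => rfl
  | .fn f k a => by
      simp only [renT]
      exact congrArg _ (funext fun i => renT_renT r s (a i))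
  | .eps F => by
      simp only [renT]
      rw [renF_renF, upRen_comp]
theorem renF_renF (r s : ℕ → ℕ) : ∀ F : Fm, renF r (renF s F) = renF (fun n => r (s n)) F
  | .pred p k a => by
      simp only [renF]
      exact congrArg _ (funext fun i => renT_renT r s (a i))
  | .not F => by simp only [renF]; rw [renF_renF]
  | .or F G => by simp only [renF]; rw [renF_renF, renF_renF]
  | .and F G => by simp only [renF]; rw [renF_renF, renF_renF]
  | .imp F G => by simp only [renF]; rw [renF_renF, renF_renF]
  | .ex F => by simp only [renF]; rw [renF_renF, upRen_comp]
  | .all F => by simp only [renF]; rw [renF_renF, upRen_comp]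
end

theorem upSub_upRen (σ : ℕ → Tm) (r : ℕ → ℕ) :
    (fun n => upSub σ (upRen r n)) = upSub (fun n => σ (r n)) := by
  funext n; cases n <;> simp [upRen, upSub]

mutual
theorem subT_renT (σ : ℕ → Tm) (r : ℕ → ℕ) :
    ∀ t : Tm, subT σ (renT r t) = subT (fun n => σ (r n)) t
  | .var i => rfl
  | .fn f k a => by
      simp only [renT, subT]
      exact congrArg _ (funext fun i => subT_renT σ r (a i))
  | .eps F => by simp only [renT, subT]; rw [subF_renF, upSub_upRen]
theorem subF_renF (σ : ℕ → Tm) (r : ℕ → ℕ) :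
    ∀ F : Fm, subF σ (renF r F) = subF (fun n => σ (r n)) F
  | .pred p k a => by
      simp only [renF, subF]
      exact congrArg _ (funext fun i => subT_renT σ r (a i))
  | .not F => by simp only [renF, subF]; rw [subF_renF]
  | .or F G => by simp only [renF, subF]; rw [subF_renF, subF_renF]
  | .and F G => by simp only [renF, subF]; rw [subF_renF, subF_renF]
  | .imp F G => by simp only [renF, subF]; rw [subF_renF, subF_renF]
  | .ex F => by simp only [renF, subF]; rw [subF_renF, upSub_upRen]
  | .all F => by simp only [renF, subF]; rw [subF_renF, upSub_upRen]
end

theorem renT_upSub (r : ℕ → ℕ) (σ : ℕ → Tm) :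
    (fun n => renT (upRen r) (upSub σ n)) = upSub (fun n => renT r (σ n)) := by
  funext n
  cases n with
  | zero => simp [upSub, renT, upRen]
  | succ n =>
      simp only [upSub, renT_renT]
      rw [show (fun m => upRen r (Nat.succ m)) = (fun m => Nat.succ (r m)) from
        funext fun m => rfl, ← renT_renT]

mutual
theorem renT_subT (r : ℕ → ℕ) (σ : ℕ → Tm) :
    ∀ t : Tm, renT r (subT σ t) = subT (fun n => renT r (σ n)) t
  | .var i => rfl
  | .fn f k a => by
      simp only [subT, renT]
      exact congrArg _ (funext fun i => renT_subT r σ (a i))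
  | .eps F => by simp only [subT, renT]; rw [renF_subF, renT_upSub]
theorem renF_subF (r : ℕ → ℕ) (σ : ℕ → Tm) :
    ∀ F : Fm, renF r (subF σ F) = subF (fun n => renT r (σ n)) F
  | .pred p k a => by
      simp only [subF, renF]
      exact congrArg _ (funext fun i => renT_subT r σ (a i))
  | .not F => by simp only [subF, renF]; rw [renF_subF]
  | .or F G => by simp only [subF, renF]; rw [renF_subF, renF_subF]
  | .and F G => by simp only [subF, renF]; rw [renF_subF, renF_subF]
  | .imp F G => by simp only [subF, renF]; rw [renF_subF, renF_subF]
  | .ex F => by simp only [subF, renF]; rw [renF_subF, renT_upSub]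
  | .all F => by simp only [subF, renF]; rw [renF_subF, renT_upSub]
end

theorem subT_upSub (τ σ : ℕ → Tm) :
    (fun n => subT (upSub τ) (upSub σ n)) = upSub (fun n => subT τ (σ n)) := by
  funext n
  cases n with
  | zero => simp [upSub, subT]
  | succ n =>
      simp only [upSub, subT_renT]
      exact (renT_subT Nat.succ τ (σ n)).symm

mutual
theorem subT_subT (τ σ : ℕ → Tm) :
    ∀ t : Tm, subT τ (subT σ t) = subT (fun n => subT τ (σ n)) t
  | .var i => rfl
  | .fn f k a => by
      simp only [subT]
      exact congrArg _ (funext fun i => subT_subT τ σ (a i))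
  | .eps F => by simp only [subT]; rw [subF_subF, subT_upSub]
theorem subF_subF (τ σ : ℕ → Tm) :
    ∀ F : Fm, subF τ (subF σ F) = subF (fun n => subT τ (σ n)) F
  | .pred p k a => by
      simp only [subF]
      exact congrArg _ (funext fun i => subT_subT τ σ (a i))
  | .not F => by simp only [subF]; rw [subF_subF]
  | .or F G => by simp only [subF]; rw [subF_subF, subF_subF]
  | .and F G => by simp only [subF]; rw [subF_subF, subF_subF]
  | .imp F G => by simp only [subF]; rw [subF_subF, subF_subF]
  | .ex F => by simp only [subF]; rw [subF_subF, subT_upSub]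
  | .all F => by simp only [subF]; rw [subF_subF, subT_upSub]
end

theorem upSub_var : upSub (fun n => Tm.var n) = fun n => Tm.var n := by
  funext n; cases n <;> simp [upSub, renT]

mutual
theorem subT_id : ∀ t : Tm, subT (fun n => Tm.var n) t = t
  | .var i => rfl
  | .fn f k a => by
      simp only [subT]
      exact congrArg _ (funext fun i => subT_id (a i))
  | .eps F => by simp only [subT]; rw [upSub_var, subF_id]
theorem subF_id : ∀ F : Fm, subF (fun n => Tm.var n) F = F
  | .pred p k a => by
      simp only [subF]
      exact congrArg _ (funext fun i => subT_id (a i))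
  | .not F => by simp only [subF]; rw [subF_id]
  | .or F G => by simp only [subF]; rw [subF_id, subF_id]
  | .and F G => by simp only [subF]; rw [subF_id, subF_id]
  | .imp F G => by simp only [subF]; rw [subF_id, subF_id]
  | .ex F => by simp only [subF]; rw [upSub_var, subF_id]
  | .all F => by simp only [subF]; rw [upSub_var, subF_id]
end

theorem subF_mkQ (σ : ℕ → Tm) (Q : Quant) (A : Fm) :
    subF σ (mkQ Q A) = mkQ Q (subF (upSub σ) A) := by
  cases Q <;> simp [mkQ, subF]

theorem renF_mkQ (r : ℕ → ℕ) (Q : Quant) (A : Fm) :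
    renF r (mkQ Q A) = mkQ Q (renF (upRen r) A) := by
  cases Q <;> simp [mkQ, renF]

theorem subF_negQ (σ : ℕ → Tm) (Q : Quant) (A : Fm) :
    subF σ (negQ Q A) = negQ Q (subF σ A) := by
  cases Q <;> simp [negQ, subF]

theorem renF_negQ (r : ℕ → ℕ) (Q : Quant) (A : Fm) :
    renF r (negQ Q A) = negQ Q (renF r A) := by
  cases Q <;> simp [negQ, renF]

theorem subF_qeRedex (σ : ℕ → Tm) (Q : Quant) (A : Fm) :
    subF σ (qeRedex Q A) = qeRedex Q (subF (upSub σ) A) := by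
  unfold qeRedex
  rw [inst1_eq, inst1_eq, subF_subF, subF_subF]
  have hσ : (fun n => subT σ (iσ (Tm.eps (negQ Q A)) n))
      = (fun n => subT (iσ (Tm.eps (negQ Q (subF (upSub σ) A)))) (upSub σ n)) := by
    funext n
    cases n with
    | zero => simp only [iσ, subT, subF_negQ, upSub]
    | succ n =>
        simp only [iσ, subT, upSub, subT_renT]
        exact (subT_id (σ n)).symm
  rw [hσ]

theorem renF_qeRedex (r : ℕ → ℕ) (Q : Quant) (A : Fm) :
    renF r (qeRedex Q A) = qeRedex Q (renF (upRen r) A) := by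
  unfold qeRedex
  rw [inst1_eq, inst1_eq, renF_subF, subF_renF]
  have hσ : (fun n => renT r (iσ (Tm.eps (negQ Q A)) n))
      = (fun n => iσ (Tm.eps (negQ Q (renF (upRen r) A))) (upRen r n)) := by
    funext n
    cases n with
    | zero => simp only [iσ, renT, renF_negQ, upRen]
    | succ n => simp only [iσ, renT, upRen]
  rw [hσ]

mutual
theorem freeT_renT (r : ℕ → ℕ) (n : ℕ) :
    ∀ t : Tm, freeT n (renT r t) ↔ ∃ m, r m = n ∧ freeT m t
  | .var i => by
      simp only [renT, freeT]
      constructor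
      · intro h; exact ⟨i, h, rfl⟩
      · rintro ⟨m, h1, h2⟩
        have : i = m := h2
        subst this; exact h1
  | .fn f k a => by
      simp only [renT, freeT]
      constructor
      · rintro ⟨i, hi⟩
        obtain ⟨m, hm, hf⟩ := (freeT_renT r n (a i)).mp hi
        exact ⟨m, hm, i, hf⟩
      · rintro ⟨m, hm, i, hf⟩
        exact ⟨i, (freeT_renT r n (a i)).mpr ⟨m, hm, hf⟩⟩
  | .eps F => by
      simp only [renT, freeT]
      rw [freeF_renF]
      constructor
      · rintro ⟨m, hm, hf⟩
        match m with
        | 0 => exact absurd hm (by simp [upRen])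
        | m + 1 =>
            refine ⟨m, ?_, hf⟩
            simpa [upRen] using hm
      · rintro ⟨m, hm, hf⟩
        exact ⟨m + 1, by simp [upRen, hm], hf⟩
theorem freeF_renF (r : ℕ → ℕ) (n : ℕ) :
    ∀ F : Fm, freeF n (renF r F) ↔ ∃ m, r m = n ∧ freeF m F
  | .pred p k a => by
      simp only [renF, freeF]
      constructor
      · rintro ⟨i, hi⟩
        obtain ⟨m, hm, hf⟩ := (freeT_renT r n (a i)).mp hi
        exact ⟨m, hm, i, hf⟩
      · rintro ⟨m, hm, i, hf⟩
        exact ⟨i, (freeT_renT r n (a i)).mpr ⟨m, hm, hf⟩⟩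
  | .not F => by simp only [renF, freeF]; exact freeF_renF r n F
  | .or F G => by
      simp only [renF, freeF]
      rw [freeF_renF r n F, freeF_renF r n G]
      constructor
      · rintro (⟨m, hm, hf⟩ | ⟨m, hm, hf⟩)
        exacts [⟨m, hm, Or.inl hf⟩, ⟨m, hm, Or.inr hf⟩]
      · rintro ⟨m, hm, hf | hf⟩
        exacts [Or.inl ⟨m, hm, hf⟩, Or.inr ⟨m, hm, hf⟩]
  | .and F G => by
      simp only [renF, freeF]
      rw [freeF_renF r n F, freeF_renF r n G]
      constructor
      · rintro (⟨m, hm, hf⟩ | ⟨m, hm, hf⟩)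
        exacts [⟨m, hm, Or.inl hf⟩, ⟨m, hm, Or.inr hf⟩]
      · rintro ⟨m, hm, hf | hf⟩
        exacts [Or.inl ⟨m, hm, hf⟩, Or.inr ⟨m, hm, hf⟩]
  | .imp F G => by
      simp only [renF, freeF]
      rw [freeF_renF r n F, freeF_renF r n G]
      constructor
      · rintro (⟨m, hm, hf⟩ | ⟨m, hm, hf⟩)
        exacts [⟨m, hm, Or.inl hf⟩, ⟨m, hm, Or.inr hf⟩]
      · rintro ⟨m, hm, hf | hf⟩
        exacts [Or.inl ⟨m, hm, hf⟩, Or.inr ⟨m, hm, hf⟩]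
  | .ex F => by
      simp only [renF, freeF]
      rw [freeF_renF (upRen r) (n + 1) F]
      constructor
      · rintro ⟨m, hm, hf⟩
        match m with
        | 0 => exact absurd hm (by simp [upRen])
        | m + 1 => exact ⟨m, by simpa [upRen] using hm, hf⟩
      · rintro ⟨m, hm, hf⟩
        exact ⟨m + 1, by simp [upRen, hm], hf⟩
  | .all F => by
      simp only [renF, freeF]
      rw [freeF_renF (upRen r) (n + 1) F]
      constructor
      · rintro ⟨m, hm, hf⟩
        match m with
        | 0 => exact absurd hm (by simp [upRen])
        | m + 1 => exact ⟨m, by simpa [upRen] using hm, hf⟩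
      · rintro ⟨m, hm, hf⟩
        exact ⟨m + 1, by simp [upRen, hm], hf⟩
end

/-- key binder case reduction for `freeF_subF`. -/
theorem freeT_upSub (σ : ℕ → Tm) (n : ℕ) :
    ∀ m, freeT (n + 1) (upSub σ m) ↔ ∃ m', m = m' + 1 ∧ freeT n (σ m')
  | 0 => by simp [upSub, freeT]
  | m + 1 => by
      simp only [upSub]
      rw [freeT_renT]
      constructor
      · rintro ⟨j, hj, hf⟩
        exact ⟨m, rfl, by simpa [Nat.succ_injective hj] using hf⟩
      · rintro ⟨m', hm', hf⟩
        cases hm'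
        exact ⟨n, rfl, hf⟩

mutual
theorem freeT_subT (σ : ℕ → Tm) (n : ℕ) :
    ∀ t : Tm, freeT n (subT σ t) ↔ ∃ m, freeT m t ∧ freeT n (σ m)
  | .var i => by
      simp only [subT, freeT]
      constructor
      · intro h; exact ⟨i, rfl, h⟩
      · rintro ⟨m, hm, hf⟩; subst hm; exact hf
  | .fn f k a => by
      simp only [subT, freeT]
      constructor
      · rintro ⟨i, hi⟩
        obtain ⟨m, hm, hf⟩ := (freeT_subT σ n (a i)).mp hi
        exact ⟨m, ⟨i, hm⟩, hf⟩
      · rintro ⟨m, ⟨i, hm⟩, hf⟩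
        exact ⟨i, (freeT_subT σ n (a i)).mpr ⟨m, hm, hf⟩⟩
  | .eps F => by
      simp only [subT, freeT]
      rw [freeF_subF]
      constructor
      · rintro ⟨m, hm, hf⟩
        obtain ⟨m', rfl, hf'⟩ := (freeT_upSub σ n m).mp hf
        exact ⟨m', hm, hf'⟩
      · rintro ⟨m, hm, hf⟩
        exact ⟨m + 1, hm, (freeT_upSub σ n (m + 1)).mpr ⟨m, rfl, hf⟩⟩
theorem freeF_subF (σ : ℕ → Tm) (n : ℕ) :
    ∀ F : Fm, freeF n (subF σ F) ↔ ∃ m, freeF m F ∧ freeT n (σ m)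
  | .pred p k a => by
      simp only [subF, freeF]
      constructor
      · rintro ⟨i, hi⟩
        obtain ⟨m, hm, hf⟩ := (freeT_subT σ n (a i)).mp hi
        exact ⟨m, ⟨i, hm⟩, hf⟩
      · rintro ⟨m, ⟨i, hm⟩, hf⟩
        exact ⟨i, (freeT_subT σ n (a i)).mpr ⟨m, hm, hf⟩⟩
  | .not F => by simp only [subF, freeF]; exact freeF_subF σ n F
  | .or F G => by
      simp only [subF, freeF]
      rw [freeF_subF σ n F, freeF_subF σ n G]
      constructor
      · rintro (⟨m, hm, hf⟩ | ⟨m, hm, hf⟩)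
        exacts [⟨m, Or.inl hm, hf⟩, ⟨m, Or.inr hm, hf⟩]
      · rintro ⟨m, hm | hm, hf⟩
        exacts [Or.inl ⟨m, hm, hf⟩, Or.inr ⟨m, hm, hf⟩]
  | .and F G => by
      simp only [subF, freeF]
      rw [freeF_subF σ n F, freeF_subF σ n G]
      constructor
      · rintro (⟨m, hm, hf⟩ | ⟨m, hm, hf⟩)
        exacts [⟨m, Or.inl hm, hf⟩, ⟨m, Or.inr hm, hf⟩]
      · rintro ⟨m, hm | hm, hf⟩
        exacts [Or.inl ⟨m, hm, hf⟩, Or.inr ⟨m, hm, hf⟩]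
  | .imp F G => by
      simp only [subF, freeF]
      rw [freeF_subF σ n F, freeF_subF σ n G]
      constructor
      · rintro (⟨m, hm, hf⟩ | ⟨m, hm, hf⟩)
        exacts [⟨m, Or.inl hm, hf⟩, ⟨m, Or.inr hm, hf⟩]
      · rintro ⟨m, hm | hm, hf⟩
        exacts [Or.inl ⟨m, hm, hf⟩, Or.inr ⟨m, hm, hf⟩]
  | .ex F => by
      simp only [subF, freeF]
      rw [freeF_subF (upSub σ) (n + 1) F]
      constructor
      · rintro ⟨m, hm, hf⟩
        obtain ⟨m', rfl, hf'⟩ := (freeT_upSub σ n m).mp hf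
        exact ⟨m', hm, hf'⟩
      · rintro ⟨m, hm, hf⟩
        exact ⟨m + 1, hm, (freeT_upSub σ n (m + 1)).mpr ⟨m, rfl, hf⟩⟩
  | .all F => by
      simp only [subF, freeF]
      rw [freeF_subF (upSub σ) (n + 1) F]
      constructor
      · rintro ⟨m, hm, hf⟩
        obtain ⟨m', rfl, hf'⟩ := (freeT_upSub σ n m).mp hf
        exact ⟨m', hm, hf'⟩
      · rintro ⟨m, hm, hf⟩
        exact ⟨m + 1, hm, (freeT_upSub σ n (m + 1)).mpr ⟨m, rfl, hf⟩⟩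
end

theorem freeF_negQ (Q : Quant) (A : Fm) (n : ℕ) : freeF n (negQ Q A) ↔ freeF n A := by
  cases Q <;> simp [negQ, freeF]

theorem freeF_mkQ (Q : Quant) (A : Fm) (n : ℕ) : freeF n (mkQ Q A) ↔ freeF (n + 1) A := by
  cases Q <;> simp [mkQ, freeF]

theorem freeF_qeRedex (Q : Quant) (A : Fm) (n : ℕ) :
    freeF n (qeRedex Q A) ↔ freeF (n + 1) A := by
  rw [qeRedex, inst1_eq, freeF_subF]
  constructor
  · rintro ⟨m, hm, ht⟩
    match m with
    | 0 =>
        have : freeF (n + 1) (negQ Q A) := ht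
        exact (freeF_negQ Q A (n + 1)).mp this
    | m + 1 =>
        have hmn : m = n := ht
        subst hmn; exact hm
  · intro h
    exact ⟨n + 1, h, show n = n from rfl⟩


theorem update_comp {k : ℕ} (g : Tm → Tm) (a : Fin k → Tm) (j : Fin k) (t' : Tm) :
    (fun i => g (Function.update a j t' i)) = Function.update (fun i => g (a i)) j (g t') := by
  funext i
  by_cases h : i = j
  · subst h; simp
  · simp [Function.update_of_ne h]

-- Steps are preserved by hole filling. 
mutual
theorem stepT_fill {P : Fm → Prop} {F F' : Fm} (h : StepF P F F') :
    ∀ c : CtxT, StepT P (fillT c F) (fillT c F')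
  | .fn f k a j c => by
      simpa [fillT] using StepT.fn (j := j)
        (by simpa using stepT_fill h c : StepT P (Function.update a j (fillT c F) j) (fillT c F'))
  | .eps c => .eps (stepF_fill h c)
theorem stepF_fill {P : Fm → Prop} {F F' : Fm} (h : StepF P F F') :
    ∀ c : CtxF, StepF P (fillF c F) (fillF c F')
  | .hole => h
  | .pred p k a j c => by
      simpa [fillF] using StepF.pred (j := j)
        (by simpa using stepT_fill h c : StepT P (Function.update a j (fillT c F) j) (fillT c F'))
  | .not c => .not (stepF_fill h c)
  | .orL c G => .orL (stepF_fill h c)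
  | .orR G c => .orR (stepF_fill h c)
  | .andL c G => .andL (stepF_fill h c)
  | .andR G c => .andR (stepF_fill h c)
  | .impL c G => .impL (stepF_fill h c)
  | .impR G c => .impR (stepF_fill h c)
  | .ex c => .ex (stepF_fill h c)
  | .all c => .all (stepF_fill h c)
end

-- Steps are preserved under substitution (for substitution-stable side conditions). 
mutual
theorem stepT_sub {P : Fm → Prop} (hP : ∀ (σ : ℕ → Tm) (A : Fm), P A → P (subF (upSub σ) A)) :
    ∀ {t t' : Tm}, StepT P t t' → ∀ σ : ℕ → Tm, StepT P (subT σ t) (subT σ t')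
  | _, _, .fn (a := a) (j := j) h, σ => by
      simp only [subT, update_comp]
      exact StepT.fn (stepT_sub hP h σ)
  | _, _, .eps h, σ => .eps (stepF_sub hP h (upSub σ))
theorem stepF_sub {P : Fm → Prop} (hP : ∀ (σ : ℕ → Tm) (A : Fm), P A → P (subF (upSub σ) A)) :
    ∀ {F F' : Fm}, StepF P F F' → ∀ σ : ℕ → Tm, StepF P (subF σ F) (subF σ F')
  | _, _, .root (Q := Q) (A := A) hA, σ => by
      rw [subF_mkQ, subF_qeRedex]
      exact .root (hP σ A hA)
  | _, _, .pred h, σ => by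
      simp only [subF, update_comp]
      exact StepF.pred (stepT_sub hP h σ)
  | _, _, .not h, σ => .not (stepF_sub hP h σ)
  | _, _, .orL h, σ => .orL (stepF_sub hP h σ)
  | _, _, .orR h, σ => .orR (stepF_sub hP h σ)
  | _, _, .andL h, σ => .andL (stepF_sub hP h σ)
  | _, _, .andR h, σ => .andR (stepF_sub hP h σ)
  | _, _, .impL h, σ => .impL (stepF_sub hP h σ)
  | _, _, .impR h, σ => .impR (stepF_sub hP h σ)
  | _, _, .ex h, σ => .ex (stepF_sub hP h (upSub σ))
  | _, _, .all h, σ => .all (stepF_sub hP h (upSub σ))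
end

theorem freeT_update {k : ℕ} {a : Fin k → Tm} {j : Fin k} {t' : Tm} {n : ℕ}
    (h : freeT n (a j) ↔ freeT n t') :
    (∃ i, freeT n (Function.update a j t' i)) ↔ ∃ i, freeT n (a i) := by
  constructor
  · rintro ⟨i, hi⟩
    by_cases hij : i = j
    · subst hij; rw [Function.update_self] at hi; exact ⟨i, h.mpr hi⟩
    · rw [Function.update_of_ne hij] at hi; exact ⟨i, hi⟩
  · rintro ⟨i, hi⟩
    by_cases hij : i = j
    · subst hij; exact ⟨i, by rw [Function.update_self]; exact h.mp hi⟩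
    · exact ⟨i, by rw [Function.update_of_ne hij]; exact hi⟩

-- A rewrite step does not change the set of free variables. 
mutual
theorem freeT_stepT {P : Fm → Prop} :
    ∀ {t t' : Tm}, StepT P t t' → ∀ n, freeT n t ↔ freeT n t'
  | _, _, .fn h, n => by
      simp only [freeT]
      exact (freeT_update (freeT_stepT h n)).symm
  | _, _, .eps h, n => by
      simp only [freeT]
      exact freeF_stepF h (n + 1)
theorem freeF_stepF {P : Fm → Prop} :
    ∀ {F F' : Fm}, StepF P F F' → ∀ n, freeF n F ↔ freeF n F'
  | _, _, .root (Q := Q) (A := A) _, n => by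
      rw [freeF_mkQ, freeF_qeRedex]
  | _, _, .pred h, n => by
      simp only [freeF]
      exact (freeT_update (freeT_stepT h n)).symm
  | _, _, .not h, n => by simp only [freeF]; exact freeF_stepF h n
  | _, _, .orL h, n => by simp only [freeF]; exact or_congr (freeF_stepF h n) Iff.rfl
  | _, _, .orR h, n => by simp only [freeF]; exact or_congr Iff.rfl (freeF_stepF h n)
  | _, _, .andL h, n => by simp only [freeF]; exact or_congr (freeF_stepF h n) Iff.rfl
  | _, _, .andR h, n => by simp only [freeF]; exact or_congr Iff.rfl (freeF_stepF h n)
  | _, _, .impL h, n => by simp only [freeF]; exact or_congr (freeF_stepF h n) Iff.rfl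
  | _, _, .impR h, n => by simp only [freeF]; exact or_congr Iff.rfl (freeF_stepF h n)
  | _, _, .ex h, n => by simp only [freeF]; exact freeF_stepF h (n + 1)
  | _, _, .all h, n => by simp only [freeF]; exact freeF_stepF h (n + 1)
end

-- Parallel rewriting is reflexive. 
mutual
theorem parT_refl {P : Fm → Prop} : ∀ t : Tm, ParT P t t
  | .var i => .var
  | .fn f k a => .fn (fun i => parT_refl (a i))
  | .eps F => .eps (parF_refl F)
theorem parF_refl {P : Fm → Prop} : ∀ F : Fm, ParF P F F
  | .pred p k a => .pred (fun i => parT_refl (a i))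
  | .not F => .not (parF_refl F)
  | .or F G => .or (parF_refl F) (parF_refl G)
  | .and F G => .and (parF_refl F) (parF_refl G)
  | .imp F G => .imp (parF_refl F) (parF_refl G)
  | .ex F => .ex (parF_refl F)
  | .all F => .all (parF_refl F)
end

-- Every step is a parallel step. 
mutual
theorem stepT_parT {P : Fm → Prop} : ∀ {t t' : Tm}, StepT P t t' → ParT P t t'
  | _, _, .fn (a := a) (j := j) h => .fn (fun i => by
      by_cases hij : i = j
      · subst hij; rw [Function.update_self]; exact stepT_parT h
      · rw [Function.update_of_ne hij]; exact parT_refl (a i))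
  | _, _, .eps h => .eps (stepF_parF h)
theorem stepF_parF {P : Fm → Prop} : ∀ {F F' : Fm}, StepF P F F' → ParF P F F'
  | _, _, .root hA => .root hA
  | _, _, .pred (a := a) (j := j) h => .pred (fun i => by
      by_cases hij : i = j
      · subst hij; rw [Function.update_self]; exact stepT_parT h
      · rw [Function.update_of_ne hij]; exact parT_refl (a i))
  | _, _, .not h => .not (stepF_parF h)
  | _, _, .orL h => .or (stepF_parF h) (parF_refl _)
  | _, _, .orR h => .or (parF_refl _) (stepF_parF h)
  | _, _, .andL h => .and (stepF_parF h) (parF_refl _)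
  | _, _, .andR h => .and (parF_refl _) (stepF_parF h)
  | _, _, .impL h => .imp (stepF_parF h) (parF_refl _)
  | _, _, .impR h => .imp (parF_refl _) (stepF_parF h)
  | _, _, .ex h => .ex (stepF_parF h)
  | _, _, .all h => .all (stepF_parF h)
end

-- Parallel steps are preserved by renaming (for renaming-stable side conditions). 
mutual
theorem parT_ren {P : Fm → Prop} (hP : ∀ (r : ℕ → ℕ) (A : Fm), P A → P (renF (upRen r) A)) :
    ∀ {t t' : Tm}, ParT P t t' → ∀ r : ℕ → ℕ, ParT P (renT r t) (renT r t')
  | _, _, .var, r => .var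
  | _, _, .fn h, r => .fn (fun i => parT_ren hP (h i) r)
  | _, _, .eps h, r => .eps (parF_ren hP h (upRen r))
theorem parF_ren {P : Fm → Prop} (hP : ∀ (r : ℕ → ℕ) (A : Fm), P A → P (renF (upRen r) A)) :
    ∀ {F F' : Fm}, ParF P F F' → ∀ r : ℕ → ℕ, ParF P (renF r F) (renF r F')
  | _, _, .root (Q := Q) (A := A) hA, r => by
      rw [renF_mkQ, renF_qeRedex]
      exact .root (hP r A hA)
  | _, _, .pred h, r => .pred (fun i => parT_ren hP (h i) r)
  | _, _, .not h, r => .not (parF_ren hP h r)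
  | _, _, .or h g, r => .or (parF_ren hP h r) (parF_ren hP g r)
  | _, _, .and h g, r => .and (parF_ren hP h r) (parF_ren hP g r)
  | _, _, .imp h g, r => .imp (parF_ren hP h r) (parF_ren hP g r)
  | _, _, .ex h, r => .ex (parF_ren hP h (upRen r))
  | _, _, .all h, r => .all (parF_ren hP h (upRen r))
end

theorem parT_upSub {P : Fm → Prop} (hP : ∀ (r : ℕ → ℕ) (A : Fm), P A → P (renF (upRen r) A))
    {σ σ' : ℕ → Tm} (h : ∀ m, ParT P (σ m) (σ' m)) :
    ∀ m, ParT P (upSub σ m) (upSub σ' m)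
  | 0 => .var
  | m + 1 => parT_ren hP (h m) Nat.succ

-- Parallel rewriting in the substituted terms only. 
mutual
theorem parT_sub {P : Fm → Prop} (hP : ∀ (r : ℕ → ℕ) (A : Fm), P A → P (renF (upRen r) A)) :
    ∀ (t : Tm) {σ σ' : ℕ → Tm}, (∀ m, ParT P (σ m) (σ' m)) → ParT P (subT σ t) (subT σ' t)
  | .var i, σ, σ', h => h i
  | .fn f k a, σ, σ', h => .fn (fun i => parT_sub hP (a i) h)
  | .eps F, σ, σ', h => .eps (parF_sub hP F (parT_upSub hP h))
theorem parF_sub {P : Fm → Prop} (hP : ∀ (r : ℕ → ℕ) (A : Fm), P A → P (renF (upRen r) A)) :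
    ∀ (F : Fm) {σ σ' : ℕ → Tm}, (∀ m, ParT P (σ m) (σ' m)) → ParF P (subF σ F) (subF σ' F)
  | .pred p k a, σ, σ', h => .pred (fun i => parT_sub hP (a i) h)
  | .not F, σ, σ', h => .not (parF_sub hP F h)
  | .or F G, σ, σ', h => .or (parF_sub hP F h) (parF_sub hP G h)
  | .and F G, σ, σ', h => .and (parF_sub hP F h) (parF_sub hP G h)
  | .imp F G, σ, σ', h => .imp (parF_sub hP F h) (parF_sub hP G h)
  | .ex F, σ, σ', h => .ex (parF_sub hP F (parT_upSub hP h))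
  | .all F, σ, σ', h => .all (parF_sub hP F (parT_upSub hP h))
end

/-- Substitutions agreeing on the free variables give equal results. -/
theorem upSub_congr_free {σ σ' : ℕ → Tm} {F : Fm}
    (h : ∀ m, freeF (m + 1) F → σ m = σ' m) :
    ∀ m, freeF m F → False ∨ True := fun _ _ => Or.inr trivial

mutual
theorem subT_congr_free :
    ∀ (t : Tm) {σ σ' : ℕ → Tm}, (∀ m, freeT m t → σ m = σ' m) → subT σ t = subT σ' t
  | .var i, σ, σ', h => h i rfl
  | .fn f k a, σ, σ', h => by
      simp only [subT]
      exact congrArg _ (funext fun i =>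
        subT_congr_free (a i) (fun m hm => h m ⟨i, hm⟩))
  | .eps F, σ, σ', h => by
      simp only [subT]
      rw [subF_congr_free F (fun m hm => ?_)]
      match m with
      | 0 => rfl
      | m + 1 => simp only [upSub]; rw [h m hm]
theorem subF_congr_free :
    ∀ (F : Fm) {σ σ' : ℕ → Tm}, (∀ m, freeF m F → σ m = σ' m) → subF σ F = subF σ' F
  | .pred p k a, σ, σ', h => by
      simp only [subF]
      exact congrArg _ (funext fun i =>
        subT_congr_free (a i) (fun m hm => h m ⟨i, hm⟩))
  | .not F, σ, σ', h => by
      simp only [subF]; rw [subF_congr_free F h]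
  | .or F G, σ, σ', h => by
      simp only [subF]
      rw [subF_congr_free F (fun m hm => h m (Or.inl hm)),
        subF_congr_free G (fun m hm => h m (Or.inr hm))]
  | .and F G, σ, σ', h => by
      simp only [subF]
      rw [subF_congr_free F (fun m hm => h m (Or.inl hm)),
        subF_congr_free G (fun m hm => h m (Or.inr hm))]
  | .imp F G, σ, σ', h => by
      simp only [subF]
      rw [subF_congr_free F (fun m hm => h m (Or.inl hm)),
        subF_congr_free G (fun m hm => h m (Or.inr hm))]
  | .ex F, σ, σ', h => by
      simp only [subF]
      rw [subF_congr_free F (fun m hm => ?_)]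
      match m with
      | 0 => rfl
      | m + 1 => simp only [upSub]; rw [h m hm]
  | .all F, σ, σ', h => by
      simp only [subF]
      rw [subF_congr_free F (fun m hm => ?_)]
      match m with
      | 0 => rfl
      | m + 1 => simp only [upSub]; rw [h m hm]
end


theorem parF_negQ {P : Fm → Prop} (Q : Quant) {X X' : Fm} (h : ParF P X X') :
    ParF P (negQ Q X) (negQ Q X') := by
  cases Q
  · exact h
  · exact .not h

theorem qeRedex_eq (Q : Quant) (A : Fm) :
    qeRedex Q A = subF (iσ (.eps (negQ Q A))) A := rfl

end Aux


/-- the key local-divergence lemma.  In the de Bruijn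
representation the side conditions of the paper — that `x₁` and `x₂` are
distinct and that `x₂` does not occur free in the context `G₁[·]` — hold
automatically (formulas are identified up to renaming of bound variables).
`F₀ = Q₁x₁. G₁[Q₂x₂. G₂]`; `F₁` results from rewriting the inner redex,
`F₂` from rewriting the outer, top-level redex.  Then suitable `F₃`, `F₄`
exist with: (1) `F₁ → F₄`, `F₃ → F₄`, `F₂ ⇉ F₃`; (2) if `x₂` occurs free in
`G₂` then `F₃ →₁ F₄` and `F₂ ⇉₁ F₃`; (3) if `x₁` occurs free in
`G₁[Q₂x₂. G₂]` then `F₁ →₁ F₄`; (4) if `x₁` does not occur free in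
`G₁[Q₂x₂. G₂]` then `F₃ = F₂`. -/
theorem stmt6 (Q₁ Q₂ : Quant) (C : CtxF) (G₂ : Fm) :
    ∃ F₃ F₄ : Fm,
      -- (1)
      (Step (mkQ Q₁ (fillF C (qeRedex Q₂ G₂))) F₄ ∧
        Step F₃ F₄ ∧
        Par (qeRedex Q₁ (fillF C (mkQ Q₂ G₂))) F₃) ∧
      -- (2) inner step non-vacuous
      (freeF 0 G₂ →
        Step1 F₃ F₄ ∧ Par1 (qeRedex Q₁ (fillF C (mkQ Q₂ G₂))) F₃) ∧
      -- (3) outer step non-vacuous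
      (freeF 0 (fillF C (mkQ Q₂ G₂)) →
        Step1 (mkQ Q₁ (fillF C (qeRedex Q₂ G₂))) F₄) ∧
      -- (4) outer step vacuous
      (¬ freeF 0 (fillF C (mkQ Q₂ G₂)) →
        F₃ = qeRedex Q₁ (fillF C (mkQ Q₂ G₂))) := by

  set A := fillF C (mkQ Q₂ G₂) with hA
  set A' := fillF C (qeRedex Q₂ G₂) with hA'
  -- side-condition stability facts
  have hsub : ∀ (σ : ℕ → Tm) (B : Fm), freeF 0 B → freeF 0 (subF (upSub σ) B) := by
    intro σ B h
    exact (freeF_subF (upSub σ) 0 B).mpr ⟨0, h, rfl⟩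
  have hren : ∀ (r : ℕ → ℕ) (B : Fm), freeF 0 B → freeF 0 (renF (upRen r) B) := by
    intro r B h
    exact (freeF_renF (upRen r) 0 B).mpr ⟨0, rfl, h⟩
  -- the inner step, in the context
  have step0 : ∀ {P : Fm → Prop}, P G₂ → StepF P A A' :=
    fun h => stepF_fill (StepF.root h) C
  -- pointwise parallel rewriting of the substitutions
  have pointw : ∀ {P : Fm → Prop},
      (∀ (r : ℕ → ℕ) (B : Fm), P B → P (renF (upRen r) B)) → P G₂ →
      ∀ m, ParT P (iσ (.eps (negQ Q₁ A)) m) (iσ (.eps (negQ Q₁ A')) m) := by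
    intro P _ h m
    match m with
    | 0 => exact .eps (parF_negQ Q₁ (stepF_parF (step0 h)))
    | m + 1 => exact .var
  refine ⟨subF (iσ (.eps (negQ Q₁ A'))) A, qeRedex Q₁ A', ⟨?_, ?_, ?_⟩, ?_, ?_, ?_⟩
  · exact StepF.root trivial
  · exact stepF_sub (fun _ _ _ => trivial) (step0 (P := fun _ => True) trivial) (iσ (.eps (negQ Q₁ A')))
  · rw [qeRedex_eq]
    exact parF_sub (fun _ _ _ => trivial) A (pointw (P := fun _ => True) (fun _ _ _ => trivial) trivial)
  · intro h2
    constructor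
    · exact stepF_sub hsub (step0 h2) (iσ (.eps (negQ Q₁ A')))
    · rw [qeRedex_eq]
      exact parF_sub hren A (pointw hren h2)
  · intro h3
    exact StepF.root ((freeF_stepF (step0 (P := fun _ => True) trivial) 0).mp h3)
  · intro h4
    rw [qeRedex_eq]
    refine (subF_congr_free A (fun m hm => ?_)).symm
    match m with
    | 0 => exact absurd hm h4
    | m + 1 => rfl
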